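/- (Rokhlin lemma for a single endomorphism.) Let T be a measure-preserving transformation on an atomless standard probability space (X,𝒳,μ) such that μ({x : T^m(x) = T^k(x)}) = 0 for all distinct m, k ∈ ℕ₀. Then for every ε > 0 and every n ∈ ℕ there exists a measurable set B such that B, T⁻¹(B), …, T^{-(n−1)}(B) are pairwise disjoint and their union has measure at least 1 − ε. -/

import Mathlib

open MeasureTheory ENNReal Filter Topology

lemma rokhlin_sweep {X : Type*} [MeasurableSpace X] [StandardBorelSpace X]
    (μ : Measure X) [IsProbabilityMeasure μ]
    (T : X → X) (hT : MeasurePreserving T μ μ)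
    (hfree : ∀ m k : ℕ, m ≠ k → μ {x | T^[m] x = T^[k] x} = 0)
    (δ : ℝ≥0∞) (hδ : 0 < δ) :
    ∃ A : Set X, MeasurableSet A ∧ μ A ≤ δ ∧ ∀ x, ∃ i, T^[i] x ∈ A := by
  obtain ⟨f, hf⟩ := exists_measurableEmbedding_real X
  set g : X → ℝ≥0∞ := fun x => ENNReal.ofReal (Real.arctan (f x) + 2) with hg_def
  have harct : ∀ t : ℝ, (1/4 : ℝ) ≤ Real.arctan t + 2 ∧ Real.arctan t + 2 ≤ 4 := by
    intro t
    have h1 := Real.neg_pi_div_two_lt_arctan t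
    have h2 := Real.arctan_lt_pi_div_two t
    have h3 := Real.pi_lt_d2
    constructor <;> nlinarith
  have hg_meas : Measurable g :=
    ENNReal.measurable_ofReal.comp
      ((Real.continuous_arctan.measurable.comp hf.measurable).add measurable_const)
  have hg_inj : Function.Injective g := by
    intro a b hab
    have ha := (harct (f a)).1
    have hb := (harct (f b)).1
    rw [hg_def] at hab
    simp only at hab
    rw [ENNReal.ofReal_eq_ofReal_iff (by linarith) (by linarith)] at hab
    exact hf.injective (Real.arctan_injective (by linarith))
  have hg_lb : ∀ x, ENNReal.ofReal (1/4) ≤ g x := fun x =>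
    ENNReal.ofReal_le_ofReal (harct (f x)).1
  have hg_ub : ∀ x, g x ≤ ENNReal.ofReal 4 := fun x =>
    ENNReal.ofReal_le_ofReal (harct (f x)).2
  set s : X → ℝ≥0∞ := fun x => limsup (fun i => g (T^[i] x)) atTop with hs_def
  have hTm : ∀ i : ℕ, Measurable (T^[i]) := fun i => hT.measurable.iterate i
  have hs_meas : Measurable s :=
    Measurable.limsup (fun i => hg_meas.comp (hTm i))
  have hsT : ∀ x (i : ℕ), s (T^[i] x) = s x := by
    intro x i
    have he : (fun j => g (T^[j] (T^[i] x))) = fun j => g (T^[j + i] x) := by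
      funext j; rw [Function.iterate_add_apply]
    show limsup (fun j => g (T^[j] (T^[i] x))) atTop = limsup (fun j => g (T^[j] x)) atTop
    rw [he]
    exact Filter.limsup_nat_add (fun j => g (T^[j] x)) i
  have hs_ub : ∀ x, s x ≤ ENNReal.ofReal 4 := by
    intro x
    exact limsup_le_of_le (by isBoundedDefault) (Eventually.of_forall fun i => hg_ub _)
  have hs_ne_top : ∀ x, s x ≠ ∞ := fun x => ((hs_ub x).trans_lt ENNReal.ofReal_lt_top).ne
  have hs_pos : ∀ x, 0 < s x := by
    intro x
    have : ENNReal.ofReal (1/4) ≤ s x :=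
      le_limsup_of_frequently_le (Frequently.of_forall fun i => hg_lb _) (by isBoundedDefault)
    exact lt_of_lt_of_le (ENNReal.ofReal_pos.mpr (by norm_num)) this
  -- the marker sets
  set A : ℕ → Set X := fun k =>
    {x | s x < g x + ((k : ℝ≥0∞) + 1)⁻¹ ∧ g x < s x + ((k : ℝ≥0∞) + 1)⁻¹} with hA_def
  have hA_meas : ∀ k, MeasurableSet (A k) := by
    intro k
    have : A k = {x | s x < g x + ((k : ℝ≥0∞) + 1)⁻¹} ∩ {x | g x < s x + ((k : ℝ≥0∞) + 1)⁻¹} := rfl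
    rw [this]
    exact (measurableSet_lt hs_meas (hg_meas.add measurable_const)).inter
      (measurableSet_lt hg_meas (hs_meas.add measurable_const))
  have hA_sweep : ∀ k x, ∃ i, T^[i] x ∈ A k := by
    intro k x
    set η : ℝ≥0∞ := ((k : ℝ≥0∞) + 1)⁻¹ with hη_def
    have hη : 0 < η := ENNReal.inv_pos.mpr (by simp)
    have h1 : ∃ᶠ i in atTop, s x < g (T^[i] x) + η := by
      by_contra h
      rw [Filter.not_frequently] at h
      have hle : limsup (fun i => g (T^[i] x)) atTop ≤ s x - η :=
        limsup_le_of_le (by isBoundedDefault)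
          (h.mono fun i hi => ENNReal.le_sub_of_add_le_right (by simp [hη_def]) (not_lt.mp hi))
      have : s x ≤ s x - η := hle
      have hlt : s x - η < s x := ENNReal.sub_lt_self (hs_ne_top x) (hs_pos x).ne' hη.ne'
      exact absurd (this.trans_lt hlt) (lt_irrefl _)
    have h2 : ∀ᶠ i in atTop, g (T^[i] x) < s x + η :=
      eventually_lt_of_limsup_lt (ENNReal.lt_add_right (hs_ne_top x) hη.ne')
    obtain ⟨i, hi1, hi2⟩ := (h1.and_eventually h2).exists
    exact ⟨i, by rw [hA_def]; exact ⟨by rw [hsT x i]; exact hi1, by rw [hsT x i]; exact hi2⟩⟩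
  -- the "diagonal" set has measure zero
  set S : Set X := {x | g x = s x} with hS_def
  have hS_meas : MeasurableSet S := by
    have : S = {x | g x ≤ s x} ∩ {x | s x ≤ g x} := by
      ext x; simp only [hS_def, Set.mem_setOf_eq, Set.mem_inter_iff]
      constructor
      · intro h; exact ⟨h.le, h.ge⟩
      · intro h; exact le_antisymm h.1 h.2
    rw [this]
    exact (measurableSet_le hg_meas hs_meas).inter (measurableSet_le hs_meas hg_meas)
  have hN : μ {x | ∃ m k : ℕ, m ≠ k ∧ T^[m] x = T^[k] x} = 0 := by
    have hsub : {x | ∃ m k : ℕ, m ≠ k ∧ T^[m] x = T^[k] x} ⊆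
        ⋃ p : ℕ × ℕ, {x | p.1 ≠ p.2 ∧ T^[p.1] x = T^[p.2] x} := by
      rintro x ⟨m, k, hmk, hx⟩
      exact Set.mem_iUnion.mpr ⟨(m, k), hmk, hx⟩
    refine measure_mono_null hsub (measure_iUnion_null fun p => ?_)
    by_cases hp : p.1 ≠ p.2
    · exact measure_mono_null (fun x hx => hx.2) (hfree p.1 p.2 hp)
    · have : {x | p.1 ≠ p.2 ∧ T^[p.1] x = T^[p.2] x} = ∅ := by
        ext x; simp [hp]
      simp [this]
  have hScons := (hT.conservative).ae_mem_imp_frequently_image_mem hS_meas.nullMeasurableSet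
  have hSnull : μ S = 0 := by
    rw [MeasureTheory.measure_eq_zero_iff_ae_notMem]
    filter_upwards [hScons, MeasureTheory.measure_eq_zero_iff_ae_notMem.mp hN] with x h1 h2 hxS
    obtain ⟨m, hm1, hmS⟩ := frequently_atTop.mp (h1 hxS) 1
    refine h2 ⟨m, 0, by omega, hg_inj ?_⟩
    have e1 : g (T^[m] x) = s (T^[m] x) := hmS
    have e2 : g x = s x := hxS
    simp only [Function.iterate_zero_apply]
    rw [e1, hsT x m, ← e2]
  -- continuity from above
  have hAnti : Antitone A := by
    intro k l hkl x hx
    have hinv : ((l : ℝ≥0∞) + 1)⁻¹ ≤ ((k : ℝ≥0∞) + 1)⁻¹ := by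
      apply ENNReal.inv_le_inv.mpr
      exact add_le_add_left (by exact_mod_cast hkl) 1
    exact ⟨hx.1.trans_le (add_le_add_right hinv _), hx.2.trans_le (add_le_add_right hinv _)⟩
  have hInt : (⋂ k, A k) ⊆ S := by
    intro x hx
    simp only [Set.mem_iInter] at hx
    have hgs : g x ≤ s x := by
      apply ENNReal.le_of_forall_pos_le_add
      intro e he _
      obtain ⟨k, hk⟩ := ENNReal.exists_inv_nat_lt (by exact_mod_cast he.ne' : (e : ℝ≥0∞) ≠ 0)
      refine le_trans (hx k).2.le (add_le_add_right ?_ _)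
      calc ((k : ℝ≥0∞) + 1)⁻¹ ≤ ((k : ℝ≥0∞))⁻¹ := ENNReal.inv_le_inv.mpr (by simp)
        _ ≤ e := hk.le
    have hsg : s x ≤ g x := by
      apply ENNReal.le_of_forall_pos_le_add
      intro e he _
      obtain ⟨k, hk⟩ := ENNReal.exists_inv_nat_lt (by exact_mod_cast he.ne' : (e : ℝ≥0∞) ≠ 0)
      refine le_trans (hx k).1.le (add_le_add_right ?_ _)
      calc ((k : ℝ≥0∞) + 1)⁻¹ ≤ ((k : ℝ≥0∞))⁻¹ := ENNReal.inv_le_inv.mpr (by simp)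
        _ ≤ e := hk.le
    exact le_antisymm hgs hsg
  have hIntNull : μ (⋂ k, A k) = 0 :=
    measure_mono_null hInt hSnull
  have htend : Tendsto (μ ∘ A) atTop (𝓝 0) := by
    have := tendsto_measure_iInter_atTop (fun k => (hA_meas k).nullMeasurableSet) hAnti
      ⟨0, (measure_ne_top μ _)⟩
    rwa [hIntNull] at this
  obtain ⟨k, hk⟩ := (htend.eventually_lt_const hδ).exists
  exact ⟨A k, hA_meas k, hk.le, hA_sweep k⟩
theorem stmt_5 {X : Type*} [MeasurableSpace X] [StandardBorelSpace X]
    (μ : Measure X) [IsProbabilityMeasure μ] [NullSingletonClass μ]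
    (T : X → X) (hT : MeasurePreserving T μ μ)
    (hfree : ∀ m k : ℕ, m ≠ k → μ {x | T^[m] x = T^[k] x} = 0)
    (ε : ℝ≥0∞) (hε : 0 < ε) (n : ℕ) (hn : 0 < n) :
    ∃ B : Set X, MeasurableSet B ∧
      (∀ i j : ℕ, i < n → j < n → i ≠ j → T^[i] ⁻¹' B ∩ T^[j] ⁻¹' B = ∅) ∧
      1 - ε ≤ μ (⋃ i ∈ Finset.range n, T^[i] ⁻¹' B) := by
  classical
  have hδ : (0 : ℝ≥0∞) < ε / n :=
    ENNReal.div_pos hε.ne' (ENNReal.natCast_ne_top n)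
  obtain ⟨A, hAm, hAs, hAsweep⟩ := rokhlin_sweep μ T hT hfree (ε / n) hδ
  have hTm : ∀ i : ℕ, Measurable (T^[i]) := fun i => hT.measurable.iterate i
  set r : X → ℕ := fun x => Nat.find (hAsweep x) with hr_def
  have hr_spec : ∀ x, T^[r x] x ∈ A := fun x => Nat.find_spec (hAsweep x)
  have hr_min : ∀ x, ∀ i < r x, T^[i] x ∉ A := fun x i hi => Nat.find_min (hAsweep x) hi
  have hr_eq : ∀ x m, r x = m ↔ T^[m] x ∈ A ∧ ∀ i < m, T^[i] x ∉ A := fun x m =>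
    Nat.find_eq_iff (hAsweep x)
  have hr_meas : Measurable r := by
    apply measurable_to_countable'
    intro m
    have : r ⁻¹' {m} = T^[m] ⁻¹' A ∩ ⋂ i ∈ Finset.range m, (T^[i] ⁻¹' A)ᶜ := by
      ext x
      simp only [Set.mem_preimage, Set.mem_singleton_iff, Set.mem_inter_iff, Set.mem_iInter,
        Set.mem_compl_iff, Finset.mem_range, hr_eq]
    rw [this]
    exact (hAm.preimage (hTm m)).inter
      (MeasurableSet.biInter (Finset.range m).countable_toSet
        fun i _ => (hAm.preimage (hTm i)).compl)
  have hshift : ∀ x d, d ≤ r x → r (T^[d] x) = r x - d := by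
    intro x d hd
    rw [hr_eq]
    constructor
    · rw [← Function.iterate_add_apply, Nat.sub_add_cancel hd]
      exact hr_spec x
    · intro i hi
      rw [← Function.iterate_add_apply]
      exact hr_min x _ (by omega)
  set B : Set X := r ⁻¹' {m | 0 < m ∧ n ∣ m} with hB_def
  have hBm : MeasurableSet B := hr_meas (Set.to_countable _).measurableSet
  have hBmem : ∀ x, x ∈ B ↔ 0 < r x ∧ n ∣ r x := fun x => Iff.rfl
  have hdisj : ∀ i j : ℕ, i < j → j < n → T^[i] ⁻¹' B ∩ T^[j] ⁻¹' B = ∅ := by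
    intro i j hij hj
    rw [Set.eq_empty_iff_forall_notMem]
    rintro x ⟨hxi, hxj⟩
    rw [Set.mem_preimage, hBmem] at hxi hxj
    have han : n ≤ r (T^[i] x) := Nat.le_of_dvd hxi.1 hxi.2
    have hd : j - i ≤ r (T^[i] x) := by omega
    have hTj : T^[j] x = T^[j - i] (T^[i] x) := by
      rw [← Function.iterate_add_apply]
      congr 1
      omega
    have hrj : r (T^[j] x) = r (T^[i] x) - (j - i) := by
      rw [hTj]
      exact hshift _ _ hd
    have h1 : n ∣ r (T^[i] x) - (j - i) := hrj ▸ hxj.2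
    have h2 : n ∣ r (T^[i] x) - (r (T^[i] x) - (j - i)) := Nat.dvd_sub hxi.2 h1
    have h3 : r (T^[i] x) - (r (T^[i] x) - (j - i)) = j - i := by omega
    have h4 : n ≤ j - i := Nat.le_of_dvd (by omega) (h3 ▸ h2)
    omega
  set U : Set X := ⋃ i ∈ Finset.range n, T^[i] ⁻¹' B with hU_def
  have hUm : MeasurableSet U :=
    MeasurableSet.biUnion (Finset.range n).countable_toSet
      fun i _ => hBm.preimage (hTm i)
  have hcompl : Uᶜ ⊆ ⋃ i ∈ Finset.range n, T^[i] ⁻¹' A := by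
    intro x hx
    by_cases hrx : r x < n
    · exact Set.mem_biUnion (Finset.mem_range.mpr hrx) (hr_spec x)
    · exfalso
      apply hx
      have hi : r x % n < n := Nat.mod_lt _ hn
      have hile : r x % n ≤ r x := Nat.mod_le _ _
      have hmem : T^[r x % n] x ∈ B := by
        rw [hBmem, hshift x _ hile]
        constructor
        · omega
        · exact Nat.dvd_sub_mod _
      exact Set.mem_biUnion (Finset.mem_range.mpr hi) hmem
  have hbound : μ Uᶜ ≤ ε := by
    calc μ Uᶜ ≤ μ (⋃ i ∈ Finset.range n, T^[i] ⁻¹' A) := measure_mono hcompl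
      _ ≤ ∑ i ∈ Finset.range n, μ (T^[i] ⁻¹' A) := measure_biUnion_finset_le _ _
      _ = ∑ i ∈ Finset.range n, μ A := by
          refine Finset.sum_congr rfl fun i _ => ?_
          exact (hT.iterate i).measure_preimage hAm.nullMeasurableSet
      _ = n * μ A := by rw [Finset.sum_const, Finset.card_range, nsmul_eq_mul]
      _ ≤ n * (ε / n) := mul_le_mul_right hAs _
      _ ≤ ε := ENNReal.mul_div_le
  refine ⟨B, hBm, ?_, ?_⟩
  · intro i j hi hj hij
    rcases lt_or_gt_of_ne hij with h | h
    · exact hdisj i j h hj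
    · rw [Set.inter_comm]
      exact hdisj j i h hi
  · rw [tsub_le_iff_right]
    calc (1 : ℝ≥0∞) = μ Set.univ := measure_univ.symm
      _ = μ U + μ Uᶜ := (measure_add_measure_compl hUm).symm
      _ ≤ μ U + ε := add_le_add_right hbound _
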